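/- arXiv:quant-ph/9511026 — 3 statements merged into one kernel-verified Lean document; each statement's English description precedes it below -/
import Mathlib

section
/- Let V = (Fin n → ZMod 2), and consider the Hilbert space H = ℂ^(Fin 2 × V × V) with standard basis vectors e_{(a,u,v)}. Let X₁ be the (classical, permutation) unitary determined by e_{(a,u,v)} ↦ e_{(a,u, v + a·u)} and X₂ the one determined by e_{(a,u,v)} ↦ e_{(a, u + a·v, v)}, where a·w means w if a = 1 and 0 if a = 0. Let U be a unitary operator on ℂ^V with U e₀ = e₀ (e₀ the basis vector of the zero string), and let M = 1 ⊗ 1 ⊗ U act on H. Then for every a ∈ {0,1} and every ξ ∈ ℂ^V, the operator X₁ X₂ M X₂ X₁ maps e_a ⊗ ξ ⊗ e₀ to e_a ⊗ (U^a ξ) ⊗ e₀, where U⁰ = 1 and U¹ = U; i.e. this five-gate composition implements the controlled operator Λ(U) on the first two registers with the third register returned to the zero state. -/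
/-- The elementary tensor `f ⊗ g ⊗ h` in `ℂ^(Fin 2 × V × V) ≅ ℂ² ⊗ ℂ^V ⊗ ℂ^V`. -/
noncomputable def tp3 {n : ℕ} (f : Fin 2 → ℂ)
    (g h : (Fin n → ZMod 2) → ℂ) :
    EuclideanSpace ℂ (Fin 2 × (Fin n → ZMod 2) × (Fin n → ZMod 2)) :=
  WithLp.toLp 2 (fun p : Fin 2 × (Fin n → ZMod 2) × (Fin n → ZMod 2) => f p.1 * g p.2.1 * h p.2.2)

lemma tp3_single {n : ℕ} (a : Fin 2) (u v : Fin n → ZMod 2) :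
    tp3 (Pi.single a 1) (Pi.single u 1) (Pi.single v 1) =
      EuclideanSpace.single ((a, u, v) : Fin 2 × (Fin n → ZMod 2) × (Fin n → ZMod 2)) 1 := by
  ext p
  rcases p with ⟨b, x, y⟩
  simp only [tp3, PiLp.toLp_apply, EuclideanSpace.single_apply, Pi.single_apply, Prod.mk.injEq]
  by_cases h1 : b = a <;> by_cases h2 : x = u <;> by_cases h3 : y = v <;>
    simp [h1, h2, h3]

/-- `ξ ↦ f ⊗ ξ ⊗ h` as a linear map. -/
noncomputable def tpMid {n : ℕ} (f : Fin 2 → ℂ) (h : (Fin n → ZMod 2) → ℂ) :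
    EuclideanSpace ℂ (Fin n → ZMod 2) →ₗ[ℂ]
      EuclideanSpace ℂ (Fin 2 × (Fin n → ZMod 2) × (Fin n → ZMod 2)) where
  toFun ξ := tp3 f ξ h
  map_add' ξ ζ := by ext p; simp [tp3]; ring
  map_smul' c ξ := by ext p; simp [tp3]; ring

/-- `η ↦ f ⊗ g ⊗ η` as a linear map. -/
noncomputable def tpRight {n : ℕ} (f : Fin 2 → ℂ) (g : (Fin n → ZMod 2) → ℂ) :
    EuclideanSpace ℂ (Fin n → ZMod 2) →ₗ[ℂ]
      EuclideanSpace ℂ (Fin 2 × (Fin n → ZMod 2) × (Fin n → ZMod 2)) where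
  toFun η := tp3 f g η
  map_add' η ζ := by ext p; simp [tp3]; ring
  map_smul' c η := by ext p; simp [tp3]; ring

lemma vadd_self {n : ℕ} (w : Fin n → ZMod 2) : w + w = 0 := by
  funext i; exact CharTwo.add_self_eq_zero _

/-- Implementation of the controlled operator `Λ(U)` by the five-gate sequence
`X₁ X₂ M X₂ X₁`, where `X₁ : e_(a,u,v) ↦ e_(a,u,v+a·u)` and
`X₂ : e_(a,u,v) ↦ e_(a,u+a·v,v)` are controlled-XOR copy gates,
`M = 1 ⊗ 1 ⊗ U`, and `U` is unitary with `U e₀ = e₀`. -/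
theorem stmt5 (n : ℕ)
    (U : EuclideanSpace ℂ (Fin n → ZMod 2) →L[ℂ] EuclideanSpace ℂ (Fin n → ZMod 2))
    (hU : U ∈ unitary (EuclideanSpace ℂ (Fin n → ZMod 2) →L[ℂ] EuclideanSpace ℂ (Fin n → ZMod 2)))
    (hU0 : U (EuclideanSpace.single 0 1) = EuclideanSpace.single 0 1)
    (X₁ X₂ M : EuclideanSpace ℂ (Fin 2 × (Fin n → ZMod 2) × (Fin n → ZMod 2)) →L[ℂ]
      EuclideanSpace ℂ (Fin 2 × (Fin n → ZMod 2) × (Fin n → ZMod 2)))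
    (hX₁ : ∀ (a : Fin 2) (u v : Fin n → ZMod 2),
      X₁ (EuclideanSpace.single (a, u, v) 1) =
        EuclideanSpace.single (a, u, v + if a = 1 then u else 0) 1)
    (hX₂ : ∀ (a : Fin 2) (u v : Fin n → ZMod 2),
      X₂ (EuclideanSpace.single (a, u, v) 1) =
        EuclideanSpace.single (a, u + (if a = 1 then v else 0), v) 1)
    (hM : ∀ (a : Fin 2) (u v : Fin n → ZMod 2),
      M (EuclideanSpace.single (a, u, v) 1) =
        tp3 (Pi.single a 1) (Pi.single u 1) (U (EuclideanSpace.single v 1)))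
    (a : Fin 2) (ξ : EuclideanSpace ℂ (Fin n → ZMod 2)) :
    X₁ (X₂ (M (X₂ (X₁ (tp3 (Pi.single a 1) ξ (EuclideanSpace.single 0 1)))))) =
      tp3 (Pi.single a 1) (if a = 1 then U ξ else ξ) (EuclideanSpace.single 0 1) := by
  classical
  have hsingle : ∀ v : Fin n → ZMod 2,
      (EuclideanSpace.single v 1 : EuclideanSpace ℂ (Fin n → ZMod 2)).ofLp = Pi.single v 1 := by
    intro v; rfl
  -- key lemma for the case a = 1 : `X₁ X₂ (e₁ ⊗ e₀ ⊗ η) = e₁ ⊗ η ⊗ e₀`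
  have key : ∀ η : EuclideanSpace ℂ (Fin n → ZMod 2),
      X₁ (X₂ (tp3 (Pi.single (1 : Fin 2) 1) (Pi.single 0 1) η)) =
        tp3 (Pi.single (1 : Fin 2) 1) η (Pi.single 0 1) := by
    have hmap : (X₁.toLinearMap ∘ₗ X₂.toLinearMap ∘ₗ
        tpRight (n := n) (Pi.single (1 : Fin 2) 1) (Pi.single 0 1)) =
        tpMid (Pi.single (1 : Fin 2) 1) (Pi.single 0 1) := by
      apply Module.Basis.ext (EuclideanSpace.basisFun (Fin n → ZMod 2) ℂ).toBasis
      intro w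
      simp only [OrthonormalBasis.coe_toBasis, EuclideanSpace.basisFun_apply,
        LinearMap.coe_comp, Function.comp_apply, ContinuousLinearMap.coe_coe]
      show X₁ (X₂ (tp3 (Pi.single (1 : Fin 2) 1) (Pi.single 0 1) (EuclideanSpace.single w 1))) =
        tp3 (Pi.single (1 : Fin 2) 1) (EuclideanSpace.single w 1) (Pi.single 0 1)
      rw [hsingle, tp3_single, hX₂, hX₁]
      simp only [if_true, zero_add, vadd_self]
      exact (tp3_single 1 w 0).symm
    intro η
    exact LinearMap.congr_fun hmap η
  -- apply the whole chain as a linear map in ξ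
  have hmain : ∀ ζ : EuclideanSpace ℂ (Fin n → ZMod 2),
      X₁ (X₂ (M (X₂ (X₁ (tp3 (Pi.single a 1) ζ (EuclideanSpace.single 0 1)))))) =
        tp3 (Pi.single a 1) (if a = 1 then U ζ else ζ) (EuclideanSpace.single 0 1) := by
    have hmap : (X₁.toLinearMap ∘ₗ X₂.toLinearMap ∘ₗ M.toLinearMap ∘ₗ X₂.toLinearMap ∘ₗ
        X₁.toLinearMap ∘ₗ tpMid (n := n) (Pi.single a 1) (Pi.single 0 1)) =
        tpMid (Pi.single a 1) (Pi.single 0 1) ∘ₗ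
          (if a = 1 then U.toLinearMap else LinearMap.id) := by
      apply Module.Basis.ext (EuclideanSpace.basisFun (Fin n → ZMod 2) ℂ).toBasis
      intro u
      simp only [OrthonormalBasis.coe_toBasis, EuclideanSpace.basisFun_apply,
        LinearMap.coe_comp, Function.comp_apply, ContinuousLinearMap.coe_coe]
      show X₁ (X₂ (M (X₂ (X₁ (tp3 (Pi.single a 1) (EuclideanSpace.single u 1)
          (Pi.single 0 1)))))) =
        tpMid (Pi.single a 1) (Pi.single 0 1)
          ((if a = 1 then (U.toLinearMap : _ →ₗ[ℂ] _) else LinearMap.id)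
            (EuclideanSpace.single u 1))
      rcases Fin.exists_fin_two.mp ⟨a, rfl⟩ with ha | ha
      · subst ha
        have h01 : ¬ ((0 : Fin 2) = 1) := by decide
        rw [hsingle, tp3_single, hX₁]
        simp only [if_neg h01, add_zero]
        rw [hX₂]
        simp only [if_neg h01, add_zero]
        rw [hM, hU0, hsingle, tp3_single, hX₂]
        simp only [if_neg h01, add_zero]
        rw [hX₁]
        simp only [if_neg h01, add_zero]
        show _ = tp3 (Pi.single (0 : Fin 2) 1) (LinearMap.id (R := ℂ) (M := EuclideanSpace ℂ (Fin n → ZMod 2)) (EuclideanSpace.single u 1))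
          (Pi.single 0 1)
        rw [LinearMap.id_apply, hsingle, ← tp3_single]
      · subst ha
        rw [hsingle, tp3_single, hX₁]
        simp only [if_true, zero_add]
        rw [hX₂]
        simp only [if_true, vadd_self]
        rw [hM, key]
        show _ = tp3 (Pi.single (1 : Fin 2) 1) (U.toLinearMap (EuclideanSpace.single u 1))
          (Pi.single 0 1)
        rfl
    intro ζ
    have h := LinearMap.congr_fun hmap ζ
    simp only [LinearMap.coe_comp, Function.comp_apply, ContinuousLinearMap.coe_coe] at h
    show X₁ (X₂ (M (X₂ (X₁ (tp3 (Pi.single a 1) ζ (Pi.single 0 1)))))) =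
      tp3 (Pi.single a 1) (if a = 1 then U ζ else ζ) (Pi.single 0 1)
    by_cases ha : a = 1
    · simpa [ha, tpMid] using h
    · simpa [ha, tpMid] using h
  exact hmain ξ
end

section
/- Let Ω and Θ be finite index sets and F : Ω → Θ a function. Let (P_V)_{V∈Ω} and (Q_W)_{W∈Θ} each be families of orthogonal projection matrices on ℂ^M with pairwise orthogonal ranges (P_V P_{V'} = 0 for V ≠ V', Q_W Q_{W'} = 0 for W ≠ W'). Let U be a unitary matrix on ℂ^M and (T_W)_{W∈Θ} unitary matrices on ℂ^D. Define the unitary T = Σ_{W∈Θ} Q_W ⊗ T_W + (1 − Σ_{W∈Θ} Q_W) ⊗ 1 on ℂ^M ⊗ ℂ^D, and define F_T = Σ_{V∈Ω} P_V ⊗ T_{F(V)}. Suppose that U computes F with error probability at most ε, i.e. for every V ∈ Ω and every unit vector ξ ∈ ℂ^M with P_V ξ = ξ one has ‖Q_{F(V)}·(Uξ)‖² ≥ 1 − ε. Then for every unit vector ζ ∈ ℂ^M ⊗ ℂ^D satisfying ((Σ_{V∈Ω} P_V) ⊗ 1)ζ = ζ, one has ‖( (U ⊗ 1)⁻¹ ·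 T · (U ⊗ 1) − F_T ) ζ‖ ≤ 2·√(|Ω|·ε); i.e. the operator (U⊗1)⁻¹ T (U⊗1) represents the measurement operator F_T with precision 2√(|Ω|ε). -/
open Matrix Kronecker

/-- The squared Euclidean norm of a complex vector. -/
noncomputable def enormSq {α : Type*} [Fintype α] (v : α → ℂ) : ℝ :=
  ∑ i, Complex.normSq (v i)


set_option linter.unusedSectionVars false

section Aux
variable {l m n p : Type*} [Fintype l] [Fintype m] [Fintype n] [Fintype p] [DecidableEq l] [DecidableEq m] [DecidableEq n]
  [DecidableEq p]

lemma conjT_kron (A : Matrix l m ℂ) (B : Matrix n p ℂ) : (A ⊗ₖ B)ᴴ = Aᴴ ⊗ₖ Bᴴ := by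
  ext ⟨i, j⟩ ⟨k, r⟩
  simp [Matrix.conjTranspose_apply, Matrix.kroneckerMap_apply, mul_comm]

lemma sum_kron {ι : Type*} (s : Finset ι) (A : ι → Matrix l m ℂ) (B : Matrix n p ℂ) :
    (∑ i ∈ s, A i) ⊗ₖ B = ∑ i ∈ s, A i ⊗ₖ B := by
  ext ⟨i, j⟩ ⟨k, r⟩
  simp [Matrix.kroneckerMap_apply, Matrix.sum_apply, Finset.sum_mul]

lemma sub_kron (A B : Matrix l m ℂ) (C : Matrix n p ℂ) :
    (A - B) ⊗ₖ C = A ⊗ₖ C - B ⊗ₖ C := by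
  ext ⟨i, j⟩ ⟨k, r⟩
  simp [Matrix.kroneckerMap_apply, Matrix.sub_apply, sub_mul]

lemma sum_mulVecC {ι : Type*} (s : Finset ι) (A : ι → Matrix m n ℂ) (x : n → ℂ) :
    (∑ i ∈ s, A i) *ᵥ x = ∑ i ∈ s, A i *ᵥ x := by
  ext j
  simp only [Matrix.mulVec, dotProduct, Matrix.sum_apply, Finset.sum_mul,
    Finset.sum_apply]
  rw [Finset.sum_comm]

lemma mulVec_sumC {ι : Type*} (s : Finset ι) (A : Matrix m n ℂ) (x : ι → (n → ℂ)) :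
    A *ᵥ (∑ i ∈ s, x i) = ∑ i ∈ s, A *ᵥ x i := by
  ext j
  simp only [Matrix.mulVec, dotProduct, Finset.mul_sum, Finset.sum_apply]
  rw [Finset.sum_comm]

lemma dot_sumC {ι : Type*} (s : Finset ι) (x : n → ℂ) (y : ι → (n → ℂ)) :
    x ⬝ᵥ (∑ i ∈ s, y i) = ∑ i ∈ s, x ⬝ᵥ y i := by
  simp only [dotProduct, Finset.sum_apply, Finset.mul_sum]
  rw [Finset.sum_comm]

lemma enormSq_nonneg (v : n → ℂ) : 0 ≤ enormSq v :=
  Finset.sum_nonneg fun _ _ => Complex.normSq_nonneg _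

lemma enormSq_eq_re (v : n → ℂ) : enormSq v = (star v ⬝ᵥ v).re := by
  simp [enormSq, dotProduct, Complex.normSq_apply, Complex.mul_re]

lemma star_mulVec_dot (A : Matrix m n ℂ) (x : n → ℂ) (y : m → ℂ) :
    star (A *ᵥ x) ⬝ᵥ y = star x ⬝ᵥ (Aᴴ *ᵥ y) := by
  rw [Matrix.star_mulVec, ← Matrix.dotProduct_mulVec]

lemma enormSq_mulVec (A : Matrix m n ℂ) (x : n → ℂ) :
    enormSq (A *ᵥ x) = (star x ⬝ᵥ ((Aᴴ * A) *ᵥ x)).re := by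
  rw [enormSq_eq_re, star_mulVec_dot, Matrix.mulVec_mulVec]

lemma enormSq_mulVec_unitary {A : Matrix n n ℂ} (hA : Aᴴ * A = 1) (x : n → ℂ) :
    enormSq (A *ᵥ x) = enormSq x := by
  rw [enormSq_mulVec, hA, Matrix.one_mulVec, enormSq_eq_re]

lemma enormSq_smul (a : ℂ) (v : n → ℂ) :
    enormSq (a • v) = Complex.normSq a * enormSq v := by
  simp [enormSq, Complex.normSq_mul, Finset.mul_sum]

lemma sqrt_enormSq_eq_norm (v : n → ℂ) :
    Real.sqrt (enormSq v) = ‖(WithLp.equiv 2 (n → ℂ)).symm v‖ := by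
  rw [EuclideanSpace.norm_eq]
  congr 1
  refine Finset.sum_congr rfl fun i _ => ?_
  rw [Complex.normSq_eq_norm_sq]
  rfl

lemma sqrt_enormSq_add_le (x y : n → ℂ) :
    Real.sqrt (enormSq (x + y)) ≤ Real.sqrt (enormSq x) + Real.sqrt (enormSq y) := by
  rw [sqrt_enormSq_eq_norm, sqrt_enormSq_eq_norm, sqrt_enormSq_eq_norm, WithLp.equiv_symm_apply, WithLp.toLp_add]
  exact norm_add_le _ _

lemma sqrt_enormSq_sum_le {ι : Type*} (s : Finset ι) (f : ι → (n → ℂ)) :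
    Real.sqrt (enormSq (∑ i ∈ s, f i)) ≤ ∑ i ∈ s, Real.sqrt (enormSq (f i)) := by
  classical
  induction s using Finset.induction with
  | empty => simp [enormSq]
  | insert _ _ h ih =>
    rw [Finset.sum_insert h, Finset.sum_insert h]
    exact (sqrt_enormSq_add_le _ _).trans (by linarith)

lemma enormSq_sub_le (x y : n → ℂ) :
    Real.sqrt (enormSq (x - y)) ≤ Real.sqrt (enormSq x) + Real.sqrt (enormSq y) := by
  rw [sqrt_enormSq_eq_norm, sqrt_enormSq_eq_norm, sqrt_enormSq_eq_norm, WithLp.equiv_symm_apply, WithLp.toLp_sub]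
  exact norm_sub_le _ _

lemma proj_pythagoras {B : Matrix n n ℂ} (hBh : B.IsHermitian) (hB2 : B * B = B) (x : n → ℂ) :
    enormSq x = enormSq (B *ᵥ x) + enormSq ((1 - B) *ᵥ x) := by
  have h1 : Bᴴ * B = B := by rw [hBh.eq, hB2]
  have h2 : (1 - B)ᴴ * (1 - B) = 1 - B := by
    rw [Matrix.conjTranspose_sub, Matrix.conjTranspose_one, hBh.eq, sub_mul, one_mul, mul_sub,
      mul_one, hB2]
    abel
  rw [enormSq_mulVec, enormSq_mulVec, h1, h2, enormSq_eq_re]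
  rw [Matrix.sub_mulVec, dotProduct_sub, Matrix.one_mulVec]
  simp

lemma kron_one_mulVec_col (B : Matrix m m ℂ) (x : m × p → ℂ) (i : m) (d : p) :
    ((B ⊗ₖ (1 : Matrix p p ℂ)) *ᵥ x) (i, d) = (B *ᵥ fun j => x (j, d)) i := by
  simp only [Matrix.mulVec, dotProduct, Fintype.sum_prod_type,
    Matrix.kroneckerMap_apply, Matrix.one_apply, mul_ite, mul_one, mul_zero, ite_mul, zero_mul,
    Finset.sum_ite_eq', Finset.sum_ite_eq, Finset.mem_univ, if_true]

lemma enormSq_prod_col (w : m × p → ℂ) :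
    enormSq w = ∑ d : p, enormSq (fun j => w (j, d)) := by
  rw [enormSq, Fintype.sum_prod_type]
  rw [Finset.sum_comm]
  rfl

end Aux

/-- Making quantum computation reversible: if a unitary `U` computes
`F : Ω → Θ` with error probability `≤ ε` (with respect to families of pairwise
orthogonal projections `P_V`, `Q_W`), and `T = Σ_W Q_W ⊗ T_W + (1 − Σ_W Q_W) ⊗ 1`
is a measurement operator for the target observable, then `(U⊗1)⁻¹ T (U⊗1)`
represents the measurement operator `F_T = Σ_V P_V ⊗ T_{F(V)}` with precision
`2√(|Ω|ε)` on the subspace supported by the `P_V`. -/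
theorem stmt9 (M D Ω Θ : Type) [Fintype M] [Fintype D] [Fintype Ω] [Fintype Θ]
    [DecidableEq M] [DecidableEq D]
    (F : Ω → Θ)
    (P : Ω → Matrix M M ℂ)
    (hPh : ∀ V, (P V).IsHermitian) (hP2 : ∀ V, P V * P V = P V)
    (hPo : ∀ V V', V ≠ V' → P V * P V' = 0)
    (Q : Θ → Matrix M M ℂ)
    (hQh : ∀ W, (Q W).IsHermitian) (hQ2 : ∀ W, Q W * Q W = Q W)
    (hQo : ∀ W W', W ≠ W' → Q W * Q W' = 0)
    (U : Matrix M M ℂ) (hU : U ∈ Matrix.unitaryGroup M ℂ)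
    (T : Θ → Matrix D D ℂ) (hT : ∀ W, T W ∈ Matrix.unitaryGroup D ℂ)
    (ε : ℝ) (hε : 0 ≤ ε)
    (hcomp : ∀ (V : Ω) (ξ : M → ℂ), enormSq ξ = 1 → P V *ᵥ ξ = ξ →
      1 - ε ≤ enormSq (Q (F V) *ᵥ (U *ᵥ ξ)))
    (ζ : M × D → ℂ) (hζ : enormSq ζ = 1)
    (hζP : ((∑ V, P V) ⊗ₖ (1 : Matrix D D ℂ)) *ᵥ ζ = ζ) :
    Real.sqrt (enormSq
      ((((U ⊗ₖ (1 : Matrix D D ℂ))⁻¹ *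
          ((∑ W, Q W ⊗ₖ T W) + ((1 - ∑ W, Q W) ⊗ₖ (1 : Matrix D D ℂ))) *
          (U ⊗ₖ (1 : Matrix D D ℂ))) -
        (∑ V, P V ⊗ₖ T (F V))) *ᵥ ζ)) ≤
      2 * Real.sqrt (Fintype.card Ω * ε) := by
  classical
  -- notation
  set S : Matrix M M ℂ := ∑ W, Q W with hSdef
  set Ub : Matrix (M × D) (M × D) ℂ := U ⊗ₖ (1 : Matrix D D ℂ) with hUbdef
  set Tb : Matrix (M × D) (M × D) ℂ :=
    (∑ W, Q W ⊗ₖ T W) + ((1 - S) ⊗ₖ (1 : Matrix D D ℂ)) with hTbdef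
  -- unitarity facts
  have hUl : star U * U = 1 := (Matrix.mem_unitaryGroup_iff'.mp hU)
  have hUr : U * star U = 1 := (Matrix.mem_unitaryGroup_iff.mp hU)
  have hUH : Uᴴ = star U := rfl
  have hUbH : Ubᴴ = (star U) ⊗ₖ (1 : Matrix D D ℂ) := by
    rw [hUbdef, conjT_kron, Matrix.conjTranspose_one, hUH]
  have hUbl : Ubᴴ * Ub = 1 := by
    rw [hUbH, hUbdef, ← Matrix.mul_kronecker_mul, hUl, Matrix.one_mul, Matrix.one_kronecker_one]
  have hUbr : Ub * Ubᴴ = 1 := by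
    rw [hUbH, hUbdef, ← Matrix.mul_kronecker_mul, hUr, Matrix.one_mul, Matrix.one_kronecker_one]
  have hUbinv : Ub⁻¹ = Ubᴴ := Matrix.inv_eq_left_inv hUbl
  -- projection sum facts
  have hQS : ∀ W, Q W * S = Q W := by
    intro W
    rw [hSdef, Finset.mul_sum]
    rw [Finset.sum_eq_single W (fun W' _ h => hQo W W' (Ne.symm h)) (by simp), hQ2]
  have hSQ : ∀ W, S * Q W = Q W := by
    intro W
    rw [hSdef, Finset.sum_mul]
    rw [Finset.sum_eq_single W (fun W' _ h => hQo W' W h) (by simp), hQ2]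
  have hS2 : S * S = S := by
    rw [hSdef, Finset.sum_mul]
    calc ∑ W, Q W * S = ∑ W, Q W := by
          exact Finset.sum_congr rfl fun W _ => hQS W
      _ = S := hSdef.symm
  have hSH : Sᴴ = S := by
    rw [hSdef, Matrix.conjTranspose_sum]
    exact Finset.sum_congr rfl fun W _ => (hQh W).eq
  -- Tb is unitary
  have hTbH : Tbᴴ = (∑ W, Q W ⊗ₖ (T W)ᴴ) + ((1 - S) ⊗ₖ (1 : Matrix D D ℂ)) := by
    rw [hTbdef, Matrix.conjTranspose_add, Matrix.conjTranspose_sum, conjT_kron,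
      Matrix.conjTranspose_sub, Matrix.conjTranspose_one, hSH, Matrix.conjTranspose_one]
    congr 1
    exact Finset.sum_congr rfl fun W _ => by rw [conjT_kron, (hQh W).eq]
  have hTWl : ∀ W, (T W)ᴴ * T W = 1 := fun W => Matrix.mem_unitaryGroup_iff'.mp (hT W)
  have hTb_unit : Tbᴴ * Tb = 1 := by
    rw [hTbH, hTbdef, add_mul, mul_add, mul_add]
    have t1 : (∑ W, Q W ⊗ₖ (T W)ᴴ) * (∑ W, Q W ⊗ₖ T W) = S ⊗ₖ (1 : Matrix D D ℂ) := by
      rw [Finset.sum_mul]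
      have : ∀ W : Θ, (Q W ⊗ₖ (T W)ᴴ) * (∑ W', Q W' ⊗ₖ T W') = Q W ⊗ₖ (1 : Matrix D D ℂ) := by
        intro W
        rw [Finset.mul_sum]
        rw [Finset.sum_eq_single W
          (fun W' _ h => by
            rw [← Matrix.mul_kronecker_mul, hQo W W' (Ne.symm h), Matrix.zero_kronecker])
          (by simp)]
        rw [← Matrix.mul_kronecker_mul, hQ2, hTWl]
      rw [Finset.sum_congr rfl fun W _ => this W, ← sum_kron, hSdef]
    have t2 : (∑ W, Q W ⊗ₖ (T W)ᴴ) * ((1 - S) ⊗ₖ (1 : Matrix D D ℂ)) = 0 := by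
      rw [Finset.sum_mul]
      refine Finset.sum_eq_zero fun W _ => ?_
      rw [← Matrix.mul_kronecker_mul]
      have : Q W * (1 - S) = 0 := by rw [mul_sub, mul_one, hQS, sub_self]
      rw [this, Matrix.zero_kronecker]
    have t3 : ((1 - S) ⊗ₖ (1 : Matrix D D ℂ)) * (∑ W, Q W ⊗ₖ T W) = 0 := by
      rw [Finset.mul_sum]
      refine Finset.sum_eq_zero fun W _ => ?_
      rw [← Matrix.mul_kronecker_mul]
      have : (1 - S) * Q W = 0 := by rw [sub_mul, one_mul, hSQ, sub_self]
      rw [this, Matrix.zero_kronecker]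
    have t4 : ((1 - S) ⊗ₖ (1 : Matrix D D ℂ)) * ((1 - S) ⊗ₖ (1 : Matrix D D ℂ))
        = (1 - S) ⊗ₖ (1 : Matrix D D ℂ) := by
      rw [← Matrix.mul_kronecker_mul, Matrix.one_mul]
      congr 1
      rw [sub_mul, one_mul, mul_sub, mul_one, hS2]
      abel
    rw [t1, t2, t3, t4, add_zero, zero_add, ← Matrix.add_kronecker]
    rw [add_sub_cancel, Matrix.one_kronecker_one]
  -- the error matrix
  set Err : Matrix (M × D) (M × D) ℂ :=
    Ub⁻¹ * Tb * Ub - ∑ V, P V ⊗ₖ T (F V) with hErrdef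
  -- components of ζ
  set z : Ω → (M × D → ℂ) := fun V => (P V ⊗ₖ (1 : Matrix D D ℂ)) *ᵥ ζ with hzdef
  have hsplit : ζ = ∑ V, z V := by
    conv_lhs => rw [← hζP]
    rw [sum_kron, sum_mulVecC]
  -- projection kron facts
  have hPk2 : ∀ V, (P V ⊗ₖ (1 : Matrix D D ℂ)) * (P V ⊗ₖ (1 : Matrix D D ℂ))
      = P V ⊗ₖ (1 : Matrix D D ℂ) := fun V => by
    rw [← Matrix.mul_kronecker_mul, hP2, Matrix.one_mul]
  have hPkH : ∀ V, (P V ⊗ₖ (1 : Matrix D D ℂ))ᴴ = P V ⊗ₖ (1 : Matrix D D ℂ) := fun V => by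
    rw [conjT_kron, (hPh V).eq, Matrix.conjTranspose_one]
  have hfix : ∀ V, (P V ⊗ₖ (1 : Matrix D D ℂ)) *ᵥ z V = z V := fun V => by
    rw [hzdef]
    simp only
    rw [Matrix.mulVec_mulVec, hPk2]
  -- Pythagoras over components
  have horth : ∑ V, enormSq (z V) = 1 := by
    have key : ∀ V, enormSq (z V) = (star ζ ⬝ᵥ z V).re := by
      intro V
      rw [hzdef]
      simp only
      rw [enormSq_mulVec, hPkH, hPk2]
    rw [Finset.sum_congr rfl fun V _ => key V]
    rw [show (∑ V, (star ζ ⬝ᵥ z V).re) = (star ζ ⬝ᵥ ∑ V, z V).re by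
      rw [dot_sumC, Complex.re_sum]]
    rw [← hsplit, ← enormSq_eq_re, hζ]
  -- the column error bound
  have err_col : ∀ (V : Ω) (c : M → ℂ), P V *ᵥ c = c →
      enormSq ((1 - Q (F V)) *ᵥ (U *ᵥ c)) ≤ ε * enormSq c := by
    intro V c hc
    by_cases h0 : c = 0
    · subst h0
      simp only [Matrix.mulVec_zero]
      rw [show enormSq (0 : M → ℂ) = 0 by simp [enormSq]]
      simp [mul_zero, le_refl]
    · have hne : enormSq c ≠ 0 := by
        intro h
        apply h0
        funext i
        have := (Finset.sum_eq_zero_iff_of_nonneg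
          (fun i _ => Complex.normSq_nonneg (c i))).mp h i (Finset.mem_univ i)
        exact Complex.normSq_eq_zero.mp this
      have hpos : 0 < enormSq c := lt_of_le_of_ne (enormSq_nonneg c) (Ne.symm hne)
      set t : ℝ := Real.sqrt (enormSq c) with htdef
      have htpos : 0 < t := Real.sqrt_pos.mpr hpos
      have ht2 : t ^ 2 = enormSq c := Real.sq_sqrt (le_of_lt hpos)
      set ξ : M → ℂ := ((t : ℂ))⁻¹ • c with hxidef
      have hnξ : enormSq ξ = 1 := by
        rw [hxidef, enormSq_smul, Complex.normSq_inv, Complex.normSq_ofReal]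
        rw [show t * t = enormSq c by rw [← ht2]; ring]
        field_simp
      have hPξ : P V *ᵥ ξ = ξ := by
        rw [hxidef, Matrix.mulVec_smul, hc]
      have hcompV := hcomp V ξ hnξ hPξ
      have hpyth := proj_pythagoras (hQh (F V)) (hQ2 (F V)) (U *ᵥ ξ)
      have hUunit : enormSq (U *ᵥ ξ) = enormSq ξ := enormSq_mulVec_unitary (by rw [hUH, hUl]) ξ
      have hbound : enormSq ((1 - Q (F V)) *ᵥ (U *ᵥ ξ)) ≤ ε := by
        rw [hUunit, hnξ] at hpyth
        linarith
      have hscale : (1 - Q (F V)) *ᵥ (U *ᵥ ξ) = ((t : ℂ))⁻¹ • ((1 - Q (F V)) *ᵥ (U *ᵥ c)) := by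
        rw [hxidef, Matrix.mulVec_smul, Matrix.mulVec_smul]
      rw [hscale, enormSq_smul, Complex.normSq_inv, Complex.normSq_ofReal] at hbound
      have htt : t * t = enormSq c := by rw [← ht2]; ring
      rw [htt] at hbound
      calc enormSq ((1 - Q (F V)) *ᵥ (U *ᵥ c))
          = enormSq c * ((enormSq c)⁻¹ * enormSq ((1 - Q (F V)) *ᵥ (U *ᵥ c))) := by
            field_simp
        _ ≤ enormSq c * ε := by
            exact mul_le_mul_of_nonneg_left hbound (le_of_lt hpos)
        _ = ε * enormSq c := by ring
  -- per-component bound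
  have perV : ∀ V, Real.sqrt (enormSq (Err *ᵥ z V))
      ≤ 2 * (Real.sqrt ε * Real.sqrt (enormSq (z V))) := by
    intro V
    set Pk : Matrix (M × D) (M × D) ℂ := P V ⊗ₖ (1 : Matrix D D ℂ) with hPkdef
    set X : Matrix (M × D) (M × D) ℂ := (1 : Matrix M M ℂ) ⊗ₖ T (F V) with hXdef
    set Qf : Matrix M M ℂ := Q (F V) with hQfdef
    have e1 : Ub * Pk = (U * P V) ⊗ₖ (1 : Matrix D D ℂ) := by
      rw [hUbdef, hPkdef, ← Matrix.mul_kronecker_mul, Matrix.one_mul]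
    have e2 : X * ((U * P V) ⊗ₖ (1 : Matrix D D ℂ)) = (U * P V) ⊗ₖ T (F V) := by
      rw [hXdef, ← Matrix.mul_kronecker_mul, Matrix.one_mul, Matrix.mul_one]
    have e3 : Ubᴴ * ((U * P V) ⊗ₖ T (F V)) = P V ⊗ₖ T (F V) := by
      rw [hUbH, ← Matrix.mul_kronecker_mul, Matrix.one_mul, ← Matrix.mul_assoc, hUl,
        Matrix.one_mul]
    have hsum : (∑ V', P V' ⊗ₖ T (F V')) * Pk = P V ⊗ₖ T (F V) := by
      rw [hPkdef, Finset.sum_mul, Finset.sum_eq_single V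
        (fun V' _ h => by rw [← Matrix.mul_kronecker_mul, hPo V' V h, Matrix.zero_kronecker])
        (by simp), ← Matrix.mul_kronecker_mul, hP2, Matrix.mul_one]
    have hmul : Err * Pk = Ubᴴ * ((Tb - X) * (Ub * Pk)) := by
      rw [hErrdef, hUbinv, Matrix.sub_mul, hsum, Matrix.sub_mul, Matrix.mul_sub,
        e1, e2, e3]
      simp only [Matrix.mul_assoc]
      rw [e1]
    have hzPk : z V = Pk *ᵥ ζ := rfl
    have hvec : Err *ᵥ z V = Ubᴴ *ᵥ ((Tb - X) *ᵥ (Ub *ᵥ z V)) := by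
      rw [hzPk]
      simp only [Matrix.mulVec_mulVec]
      rw [hmul]
    set η : M × D → ℂ := Ub *ᵥ z V with hηdef
    set r : M × D → ℂ := ((1 - Qf) ⊗ₖ (1 : Matrix D D ℂ)) *ᵥ η with hrdef
    have hQkron : (Tb - X) * (Qf ⊗ₖ (1 : Matrix D D ℂ)) = 0 := by
      rw [Matrix.sub_mul, hTbdef, Matrix.add_mul]
      have u1 : (∑ W, Q W ⊗ₖ T W) * (Qf ⊗ₖ (1 : Matrix D D ℂ)) = Qf ⊗ₖ T (F V) := by
        rw [Finset.sum_mul, Finset.sum_eq_single (F V)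
          (fun W _ h => by
            rw [← Matrix.mul_kronecker_mul, hQfdef, hQo W (F V) h, Matrix.zero_kronecker])
          (by simp), ← Matrix.mul_kronecker_mul, hQfdef, hQ2, Matrix.mul_one]
      have u2 : ((1 - S) ⊗ₖ (1 : Matrix D D ℂ)) * (Qf ⊗ₖ (1 : Matrix D D ℂ)) = 0 := by
        rw [← Matrix.mul_kronecker_mul]
        have : (1 - S) * Qf = 0 := by
          rw [Matrix.sub_mul, Matrix.one_mul, hQfdef, hSQ, sub_self]
        rw [this, Matrix.zero_kronecker]
      have u3 : X * (Qf ⊗ₖ (1 : Matrix D D ℂ)) = Qf ⊗ₖ T (F V) := by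
        rw [hXdef, ← Matrix.mul_kronecker_mul, Matrix.one_mul, Matrix.mul_one]
      rw [u1, u2, u3, add_zero, sub_self]
    have hηr : (Tb - X) *ᵥ η = (Tb - X) *ᵥ r := by
      have hsplit2 : η - r = (Qf ⊗ₖ (1 : Matrix D D ℂ)) *ᵥ η := by
        rw [hrdef, sub_kron, Matrix.one_kronecker_one, Matrix.sub_mulVec, Matrix.one_mulVec]
        abel
      have : (Tb - X) *ᵥ η - (Tb - X) *ᵥ r = 0 := by
        rw [← Matrix.mulVec_sub, hsplit2, Matrix.mulVec_mulVec, hQkron, Matrix.zero_mulVec]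
      exact sub_eq_zero.mp this
    -- unitarity chain
    have hUbHunit : (Ubᴴ)ᴴ * Ubᴴ = 1 := by
      rw [Matrix.conjTranspose_conjTranspose, hUbr]
    have hXunit : Xᴴ * X = 1 := by
      rw [hXdef, conjT_kron, Matrix.conjTranspose_one, ← Matrix.mul_kronecker_mul,
        Matrix.one_mul, hTWl, Matrix.one_kronecker_one]
    have hnorm1 : enormSq (Err *ᵥ z V) = enormSq ((Tb - X) *ᵥ r) := by
      rw [hvec, enormSq_mulVec_unitary hUbHunit, hηr]
    -- bound on r
    have hr2 : r = (((1 - Qf) * U) ⊗ₖ (1 : Matrix D D ℂ)) *ᵥ z V := by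
      rw [hrdef, hηdef, hUbdef, Matrix.mulVec_mulVec, ← Matrix.mul_kronecker_mul,
        Matrix.one_mul]
    have hPcol : ∀ d, P V *ᵥ (fun j => z V (j, d)) = (fun j => z V (j, d)) := by
      intro d
      funext i
      have h := congrFun (hfix V) (i, d)
      rw [kron_one_mulVec_col] at h
      exact h
    have hrbound : enormSq r ≤ ε * enormSq (z V) := by
      rw [enormSq_prod_col r, enormSq_prod_col (z V), Finset.mul_sum]
      refine Finset.sum_le_sum fun d _ => ?_
      have hcol : (fun j => r (j, d)) = (1 - Qf) *ᵥ (U *ᵥ (fun j => z V (j, d))) := by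
        funext i
        have h := congrFun (congrArg (fun v => v) hr2) (i, d)
        rw [h, kron_one_mulVec_col, ← Matrix.mulVec_mulVec]
      rw [hcol, hQfdef]
      exact err_col V _ (hPcol d)
    -- put together
    have hsub : Real.sqrt (enormSq ((Tb - X) *ᵥ r)) ≤ 2 * Real.sqrt (enormSq r) := by
      rw [Matrix.sub_mulVec]
      refine (enormSq_sub_le _ _).trans ?_
      rw [enormSq_mulVec_unitary hTb_unit, enormSq_mulVec_unitary hXunit]
      ring_nf
      linarith [Real.sqrt_nonneg (enormSq r)]
    rw [hnorm1]
    refine hsub.trans ?_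
    have : Real.sqrt (enormSq r) ≤ Real.sqrt ε * Real.sqrt (enormSq (z V)) := by
      rw [← Real.sqrt_mul hε]
      exact Real.sqrt_le_sqrt hrbound
    linarith [this]
  -- final assembly
  have hgoal : Real.sqrt (enormSq (Err *ᵥ ζ)) ≤ 2 * Real.sqrt (Fintype.card Ω * ε) := by
    have h1 : Err *ᵥ ζ = ∑ V, Err *ᵥ z V := by
      conv_lhs => rw [hsplit]
      exact mulVec_sumC _ _ _
    rw [h1]
    calc Real.sqrt (enormSq (∑ V, Err *ᵥ z V))
        ≤ ∑ V, Real.sqrt (enormSq (Err *ᵥ z V)) := sqrt_enormSq_sum_le _ _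
      _ ≤ ∑ V, 2 * (Real.sqrt ε * Real.sqrt (enormSq (z V))) :=
          Finset.sum_le_sum fun V _ => perV V
      _ = 2 * Real.sqrt ε * ∑ V, Real.sqrt (enormSq (z V)) := by
          rw [Finset.mul_sum]; exact Finset.sum_congr rfl fun V _ => by ring
      _ ≤ 2 * Real.sqrt ε * (Real.sqrt (Fintype.card Ω) * Real.sqrt (∑ V, enormSq (z V))) := by
          refine mul_le_mul_of_nonneg_left ?_ (by positivity)
          have := Real.sum_sqrt_mul_sqrt_le (f := fun _ => (1 : ℝ))
            (g := fun V => enormSq (z V)) (Finset.univ : Finset Ω)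
            (fun _ => zero_le_one) (fun V => enormSq_nonneg (z V))
          simpa using this
      _ = 2 * Real.sqrt (Fintype.card Ω * ε) := by
          rw [horth, Real.sqrt_one, mul_one, Real.sqrt_mul (by positivity)]
          ring
  exact hgoal
end

section
/- Let k be a natural number and let ε be a real number with 0 ≤ ε ≤ 1/2. Then the tail of the binomial distribution satisfies Σ_{j : 2j ≥ k, 0 ≤ j ≤ k} (k choose j) · ε^j · (1−ε)^{k−j} ≤ (2·√(ε·(1−ε)))^k. In particular, repeating a computation with error probability ε independently k times and taking the majority answer fails with probability at most λ^k where λ = 2√(ε(1−ε)) < 1 when ε < 1/2. -/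
/-- Tail bound for the binomial distribution: the probability that at least
half of `k` independent trials with failure probability `ε ≤ 1/2` fail is at
most `(2√(ε(1−ε)))^k`. -/
theorem stmt13 (k : ℕ) (ε : ℝ) (h0 : 0 ≤ ε) (h1 : ε ≤ 1 / 2) :
    ∑ j ∈ (Finset.range (k + 1)).filter (fun j => k ≤ 2 * j),
        (k.choose j : ℝ) * ε ^ j * (1 - ε) ^ (k - j) ≤
      (2 * Real.sqrt (ε * (1 - ε))) ^ k := by
  have h2 : ε ≤ 1 - ε := by linarith
  have h0' : (0:ℝ) ≤ 1 - ε := by linarith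
  set a := Real.sqrt ε with ha_def
  set b := Real.sqrt (1 - ε) with hb_def
  have ha : 0 ≤ a := Real.sqrt_nonneg _
  have hb : 0 ≤ b := Real.sqrt_nonneg _
  have hab : a ≤ b := Real.sqrt_le_sqrt h2
  have hεa : ε = a ^ 2 := (Real.sq_sqrt h0).symm
  have hεb : 1 - ε = b ^ 2 := (Real.sq_sqrt h0').symm
  have hs : Real.sqrt (ε * (1 - ε)) = a * b := Real.sqrt_mul h0 _
  have key : ∀ j ∈ (Finset.range (k + 1)).filter (fun j => k ≤ 2 * j),
      (k.choose j : ℝ) * ε ^ j * (1 - ε) ^ (k - j) ≤ (k.choose j : ℝ) * (a * b) ^ k := by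
    intro j hj
    simp only [Finset.mem_filter, Finset.mem_range] at hj
    obtain ⟨hjk, hkj⟩ := hj
    have hjk' : j ≤ k := by omega
    rw [mul_assoc]
    apply mul_le_mul_of_nonneg_left _ (by positivity)
    have : ε ^ j * (1 - ε) ^ (k - j) = a ^ (2 * j) * b ^ (2 * (k - j)) := by
      rw [hεb, hεa, ← pow_mul, ← pow_mul]
    rw [this]
    calc a ^ (2 * j) * b ^ (2 * (k - j))
        = a ^ k * (a ^ (2 * j - k) * b ^ (2 * (k - j))) := by
          rw [← mul_assoc, ← pow_add]
          congr 2
          omega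
      _ ≤ a ^ k * (b ^ (2 * j - k) * b ^ (2 * (k - j))) := by
          apply mul_le_mul_of_nonneg_left _ (by positivity)
          apply mul_le_mul_of_nonneg_right _ (by positivity)
          exact pow_le_pow_left₀ ha hab _
      _ = a ^ k * b ^ k := by
          rw [← pow_add]
          have e : 2 * j - k + 2 * (k - j) = k := by omega
          rw [e]
      _ = (a * b) ^ k := (mul_pow a b k).symm
  calc ∑ j ∈ (Finset.range (k + 1)).filter (fun j => k ≤ 2 * j),
        (k.choose j : ℝ) * ε ^ j * (1 - ε) ^ (k - j)
      ≤ ∑ j ∈ (Finset.range (k + 1)).filter (fun j => k ≤ 2 * j),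
        (k.choose j : ℝ) * (a * b) ^ k := Finset.sum_le_sum key
    _ ≤ ∑ j ∈ Finset.range (k + 1), (k.choose j : ℝ) * (a * b) ^ k := by
        apply Finset.sum_le_sum_of_subset_of_nonneg (Finset.filter_subset _ _)
        intro i _ _
        positivity
    _ = (2 : ℝ) ^ k * (a * b) ^ k := by
        rw [← Finset.sum_mul]
        congr 1
        rw [← Nat.cast_sum, Nat.sum_range_choose]
        push_cast
        ring
    _ = (2 * Real.sqrt (ε * (1 - ε))) ^ k := by rw [hs]; ring
end
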